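/- arXiv:2103.04853 — 7 statements merged into one kernel-verified Lean document; each statement's English description precedes it below -/
import Mathlib

section
/- The function F_nl is strictly decreasing on (0, ∞). Consequently, φ(0) = 0, φ(s) > 0 for every s ∈ (−v_ref, 0), and φ(s) < 0 for every s > 0. -/
open Real

/-- The friction nonlinearity `F_nl`. -/
noncomputable def Fnl (m g vs muC muS : ℝ) (v : ℝ) : ℝ :=
  m * g * (muC + (muS - muC) * Real.exp (-(v ^ 2) / vs ^ 2)) * Real.sign v

theorem stmt3 (m g vs muC muS vref : ℝ)
    (hm : 0 < m) (hg : 0 < g) (hvs : 0 < vs) (hmuC : 0 < muC) (hmu : muC < muS)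
    (hvref : 0 < vref)
    (phi : ℝ → ℝ) (hphi : ∀ s, phi s = Fnl m g vs muC muS (s + vref) - Fnl m g vs muC muS vref) :
    StrictAntiOn (Fnl m g vs muC muS) (Set.Ioi 0) ∧
    phi 0 = 0 ∧
    (∀ s ∈ Set.Ioo (-vref) 0, 0 < phi s) ∧
    (∀ s > 0, phi s < 0) := by
  have key : StrictAntiOn (Fnl m g vs muC muS) (Set.Ioi 0) := by
    intro a ha b hb hab
    simp only [Set.mem_Ioi] at ha hb
    unfold Fnl
    rw [Real.sign_of_pos ha, Real.sign_of_pos hb]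
    have hvs2 : (0:ℝ) < vs ^ 2 := by positivity
    have h1 : Real.exp (-(b ^ 2) / vs ^ 2) < Real.exp (-(a ^ 2) / vs ^ 2) := by
      apply Real.exp_lt_exp.mpr
      apply div_lt_div_of_pos_right _ hvs2
      nlinarith
    have hmg : 0 < m * g := mul_pos hm hg
    nlinarith [mul_pos (mul_pos hmg (sub_pos.mpr hmu)) (sub_pos.mpr h1)]
  refine ⟨key, ?_, ?_, ?_⟩
  · simp [hphi, Fnl]
  · intro s hs
    rw [hphi]
    have := key (Set.mem_Ioi.mpr (by linarith [hs.1] : (0:ℝ) < s + vref))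
      (Set.mem_Ioi.mpr hvref) (by linarith [hs.2])
    linarith
  · intro s hs
    rw [hphi]
    have := key (Set.mem_Ioi.mpr hvref)
      (Set.mem_Ioi.mpr (by linarith : (0:ℝ) < s + vref)) (by linarith)
    linarith
end

section
/- All eigenvalues μ ∈ ℂ of the matrix A₀ = [[−(k_v + Γ)/m, −k/m], [1, 0]] have strictly negative real part if and only if −k_v + 2·m·g·(μ_S − μ_C)·(v_ref/v_s²)·exp(−v_ref²/v_s²) < 0, equivalently if and only if k_v + Γ > 0. -/
open Matrix Real

lemma quad_root_iff (a b : ℝ) (hb : 0 < b) :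
    (∀ μ : ℂ, μ ^ 2 + (a : ℂ) * μ + (b : ℂ) = 0 → μ.re < 0) ↔ 0 < a := by
  constructor
  · intro h
    by_contra ha
    push_neg at ha
    by_cases hd : a ^ 2 - 4 * b ≥ 0
    · set s := Real.sqrt (a ^ 2 - 4 * b) with hs
      have hs2 : s ^ 2 = a ^ 2 - 4 * b := Real.sq_sqrt hd
      have hrootR : ((-a + s) / 2 : ℝ) ^ 2 + a * ((-a + s) / 2) + b = 0 := by nlinarith [hs2]
      have hroot : (((-a + s) / 2 : ℝ) : ℂ) ^ 2 + (a : ℂ) * (((-a + s) / 2 : ℝ) : ℂ) + (b : ℂ) = 0 := by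
        exact_mod_cast congrArg (Complex.ofReal) hrootR
      have := h _ hroot
      simp only [Complex.ofReal_re] at this
      have hsnn : 0 ≤ s := Real.sqrt_nonneg _
      nlinarith
    · push_neg at hd
      set t := Real.sqrt (4 * b - a ^ 2) with ht
      have ht2 : t ^ 2 = 4 * b - a ^ 2 := Real.sq_sqrt (by linarith)
      set μ : ℂ := ⟨-a / 2, t / 2⟩ with hμ
      have hroot : μ ^ 2 + (a : ℂ) * μ + (b : ℂ) = 0 := by
        rw [Complex.ext_iff]
        constructor <;>
          simp [hμ, pow_two, Complex.mul_re, Complex.mul_im, Complex.add_re, Complex.add_im] <;>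
          nlinarith [ht2]
      have := h _ hroot
      simp [hμ] at this
      linarith
  · intro ha μ hμ
    set x := μ.re
    set y := μ.im
    have hre : x ^ 2 - y ^ 2 + a * x + b = 0 := by
      have := congrArg Complex.re hμ
      simp [pow_two, Complex.mul_re, Complex.add_re, x, y] at this
      nlinarith [this]
    have him : y * (2 * x + a) = 0 := by
      have := congrArg Complex.im hμ
      simp [pow_two, Complex.mul_im, Complex.add_im, x, y] at this
      nlinarith [this]
    rcases mul_eq_zero.mp him with hy | hx
    · by_contra hxnn
      push_neg at hxnn
      nlinarith
    · nlinarith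

theorem stmt5 (m g vs k kv muC muS vref : ℝ)
    (hm : 0 < m) (hg : 0 < g) (hvs : 0 < vs) (hk : 0 < k) (hkv : 0 < kv)
    (hmuC : 0 < muC) (hmu : muC < muS) (hvref : 0 < vref)
    (Γ : ℝ)
    (hΓ : Γ = -2 * m * g * (muS - muC) * (vref / vs ^ 2) * Real.exp (-(vref ^ 2) / vs ^ 2))
    (A0 : Matrix (Fin 2) (Fin 2) ℝ) (hA0 : A0 = !![-(kv + Γ) / m, -k / m; 1, 0]) :
    ((∀ μ : ℂ, μ ∈ spectrum ℂ (A0.map Complex.ofReal) → μ.re < 0) ↔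
      -kv + 2 * m * g * (muS - muC) * (vref / vs ^ 2) * Real.exp (-(vref ^ 2) / vs ^ 2) < 0) ∧
    ((∀ μ : ℂ, μ ∈ spectrum ℂ (A0.map Complex.ofReal) → μ.re < 0) ↔ 0 < kv + Γ) := by
  set a : ℝ := (kv + Γ) / m with ha
  set b : ℝ := k / m with hb
  have hbpos : 0 < b := div_pos hk hm
  -- spectrum membership ↔ quadratic equation
  have hspec : ∀ μ : ℂ, μ ∈ spectrum ℂ (A0.map Complex.ofReal) ↔
      μ ^ 2 + (a : ℂ) * μ + (b : ℂ) = 0 := by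
    intro μ
    rw [spectrum.mem_iff, Matrix.isUnit_iff_isUnit_det, isUnit_iff_ne_zero, not_ne_iff]
    have : (algebraMap ℂ (Matrix (Fin 2) (Fin 2) ℂ)) μ - A0.map Complex.ofReal =
        !![μ + a, b; -1, μ] := by
      subst hA0
      ext i j
      fin_cases i <;> fin_cases j <;>
        simp [Matrix.algebraMap_matrix_apply, Matrix.map_apply, ha, hb] <;> push_cast <;> ring
    rw [this, Matrix.det_fin_two_of]
    constructor <;> intro h <;> linear_combination h
  have key : (∀ μ : ℂ, μ ∈ spectrum ℂ (A0.map Complex.ofReal) → μ.re < 0) ↔ 0 < a := by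
    rw [← quad_root_iff a b hbpos]
    exact forall_congr' fun μ => imp_congr_left (hspec μ)
  have hacond : (0 < a) ↔ (0 < kv + Γ) := div_pos_iff_of_pos_right hm  -- maybe wrong name
  have hGcond : (-kv + 2 * m * g * (muS - muC) * (vref / vs ^ 2) * Real.exp (-(vref ^ 2) / vs ^ 2) < 0)
      ↔ 0 < kv + Γ := by rw [hΓ]; constructor <;> intro h <;> linarith
  exact ⟨key.trans (hacond.trans hGcond.symm), key.trans hacond⟩
end

section
/- For every r with 0 < r ≤ v_ref, the set {−φ(s)/s : s ∈ [−r, r], s ≠ 0} is nonempty and bounded above, and its supremum λ_min(r) satisfies λ_min(r) ≥ −Γ > 0. -/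
/-! Near `s = 0`, `-φ s / s` is minus a difference quotient of `Fnl` at `vref`, where `Fnl` is
smooth with derivative `Γ`; so these quotients tend to `-Γ` and the supremum is at least `-Γ`.
They are bounded above because the Gaussian is Lipschitz on `(0, 2 vref]`, except at `s = -vref`,
where `sign` vanishes and the quotient `-Fnl vref / vref` is negative. -/

open Real Filter Set Topology

/-- `λ_min r` is the supremum of this set. -/
def sectorSlopes (φ : ℝ → ℝ) (r : ℝ) : Set ℝ :=
  {y : ℝ | ∃ s ∈ Set.Icc (-r) r, s ≠ 0 ∧ y = -φ s / s}

theorem sectorSlopes_nonempty (φ : ℝ → ℝ) {r : ℝ} (hr : 0 < r) : (sectorSlopes φ r).Nonempty :=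
  ⟨-φ r / r, r, ⟨by linarith, le_rfl⟩, hr.ne', rfl⟩

theorem neg_deriv_le_csSup_sectorSlopes {φ : ℝ → ℝ} {φ' r : ℝ} (hφ : HasDerivAt φ φ' 0)
    (hφ0 : φ 0 = 0) (hr : 0 < r) (hbdd : BddAbove (sectorSlopes φ r)) :
    -φ' ≤ sSup (sectorSlopes φ r) := by
  have hslope : Tendsto (fun s => -slope φ 0 s) (𝓝[≠] 0) (𝓝 (-φ')) :=
    (hasDerivAt_iff_tendsto_slope.mp hφ).neg
  refine le_of_tendsto hslope ?_
  filter_upwards [self_mem_nhdsWithin, nhdsWithin_le_nhds (Icc_mem_nhds (neg_lt_zero.2 hr) hr)]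
    with s hs0 hsr
  refine le_csSup hbdd ⟨s, hsr, hs0, ?_⟩
  rw [slope_def_field, hφ0, sub_zero, sub_zero, neg_div]

theorem hasDerivAt_exp_neg_sq_div (c x : ℝ) :
    HasDerivAt (fun x => exp (-(x ^ 2) / c)) (exp (-(x ^ 2) / c) * (-(2 * x) / c)) x := by
  have h : HasDerivAt (fun x : ℝ => -(x ^ 2) / c) (-(2 * x) / c) x := by
    simpa using ((hasDerivAt_pow 2 x).neg.div_const c)
  exact h.exp

theorem abs_exp_neg_sq_div_sub_le {c R x y : ℝ} (hc : 0 ≤ c) (hx : x ∈ Icc (-R) R)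
    (hy : y ∈ Icc (-R) R) :
    |exp (-(y ^ 2) / c) - exp (-(x ^ 2) / c)| ≤ 2 * R / c * |y - x| := by
  refine Convex.norm_image_sub_le_of_norm_hasDerivWithin_le
    (fun z _ => (hasDerivAt_exp_neg_sq_div c z).hasDerivWithinAt) (fun z hz => ?_)
    (convex_Icc _ _) hx hy
  have hexp : |exp (-(z ^ 2) / c)| ≤ 1 := by
    rw [abs_of_pos (exp_pos _), exp_le_one_iff]
    exact div_nonpos_of_nonpos_of_nonneg (neg_nonpos.2 (sq_nonneg z)) hc
  have hfactor : |-(2 * z) / c| ≤ 2 * R / c := by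
    rw [abs_div, abs_neg, abs_mul, abs_two, abs_of_nonneg hc]
    gcongr
    exact abs_le.2 hz
  rw [Real.norm_eq_abs, abs_mul, ← one_mul (2 * R / c)]
  exact mul_le_mul hexp hfactor (abs_nonneg _) zero_le_one

section Friction

variable {m g vs muC muS : ℝ}

theorem Fnl_of_pos {v : ℝ} (hv : 0 < v) :
    Fnl m g vs muC muS v = m * g * (muC + (muS - muC) * exp (-(v ^ 2) / vs ^ 2)) := by
  rw [Fnl, sign_of_pos hv, mul_one]

theorem Fnl_zero : Fnl m g vs muC muS 0 = 0 := by
  rw [Fnl, sign_zero, mul_zero]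

theorem Fnl_pos (hm : 0 < m) (hg : 0 < g) (hmuC : 0 < muC) (hmu : muC < muS) {v : ℝ}
    (hv : 0 < v) : 0 < Fnl m g vs muC muS v := by
  have hd : 0 < muS - muC := sub_pos.2 hmu
  rw [Fnl_of_pos hv]
  positivity

theorem hasDerivAt_Fnl {v : ℝ} (hv : 0 < v) :
    HasDerivAt (Fnl m g vs muC muS)
      (m * g * (muS - muC) * (exp (-(v ^ 2) / vs ^ 2) * (-(2 * v) / vs ^ 2))) v := by
  have hsmooth : HasDerivAt (fun v => m * g * (muC + (muS - muC) * exp (-(v ^ 2) / vs ^ 2)))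
      (m * g * (muS - muC) * (exp (-(v ^ 2) / vs ^ 2) * (-(2 * v) / vs ^ 2))) v := by
    simpa [mul_assoc] using
      (((hasDerivAt_exp_neg_sq_div (vs ^ 2) v).const_mul (muS - muC)).const_add muC).const_mul
        (m * g)
  exact hsmooth.congr_of_eventuallyEq
    (eventually_gt_nhds hv |>.mono fun w hw => Fnl_of_pos hw)

theorem abs_Fnl_sub_le {R v w : ℝ} (hv : v ∈ Ioc 0 R) (hw : w ∈ Ioc 0 R) :
    |Fnl m g vs muC muS w - Fnl m g vs muC muS v|
      ≤ |m * g * (muS - muC)| * (2 * R / vs ^ 2) * |w - v| := by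
  have hE := abs_exp_neg_sq_div_sub_le (sq_nonneg vs) (x := v) (y := w) (R := R)
    ⟨by linarith [hv.1, hv.2], hv.2⟩ ⟨by linarith [hw.1, hw.2], hw.2⟩
  calc |Fnl m g vs muC muS w - Fnl m g vs muC muS v|
      = |m * g * (muS - muC)| * |exp (-(w ^ 2) / vs ^ 2) - exp (-(v ^ 2) / vs ^ 2)| := by
        rw [Fnl_of_pos hw.1, Fnl_of_pos hv.1, ← abs_mul]
        ring_nf
    _ ≤ |m * g * (muS - muC)| * (2 * R / vs ^ 2 * |w - v|) := by gcongr
    _ = _ := by ring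

theorem neg_Fnl_shift_div_le (hm : 0 < m) (hg : 0 < g) (hmuC : 0 < muC) (hmu : muC < muS)
    {vref s : ℝ} (hvref : 0 < vref) (hs : s ∈ Icc (-vref) vref) (hs0 : s ≠ 0) :
    -(Fnl m g vs muC muS (s + vref) - Fnl m g vs muC muS vref) / s
      ≤ |m * g * (muS - muC)| * (2 * (2 * vref) / vs ^ 2) := by
  have hK : 0 ≤ |m * g * (muS - muC)| * (2 * (2 * vref) / vs ^ 2) := by positivity
  rcases (show 0 ≤ s + vref by linarith [hs.1]).lt_or_eq with hpos | hzero
  · have hLip := abs_Fnl_sub_le (m := m) (g := g) (vs := vs) (muC := muC) (muS := muS)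
      (v := vref) (w := s + vref) (R := 2 * vref) ⟨hvref, by linarith⟩ ⟨hpos, by linarith [hs.2]⟩
    rw [add_sub_cancel_right] at hLip
    calc -(Fnl m g vs muC muS (s + vref) - Fnl m g vs muC muS vref) / s
        ≤ |Fnl m g vs muC muS (s + vref) - Fnl m g vs muC muS vref| / |s| := by
          rw [← abs_neg, ← abs_div]
          exact le_abs_self _
      _ ≤ _ := by rwa [div_le_iff₀ (abs_pos.2 hs0)]
  · rw [← hzero, Fnl_zero, zero_sub, neg_neg]
    have hFpos := Fnl_pos (vs := vs) hm hg hmuC hmu hvref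
    have hs_neg : s < 0 := by linarith
    exact (div_neg_of_pos_of_neg hFpos hs_neg).le.trans hK

end Friction

theorem stmt9 (m g vs muC muS vref : ℝ)
    (hm : 0 < m) (hg : 0 < g) (hvs : 0 < vs) (hmuC : 0 < muC) (hmu : muC < muS)
    (hvref : 0 < vref)
    (phi : ℝ → ℝ) (hphi : ∀ s, phi s = Fnl m g vs muC muS (s + vref) - Fnl m g vs muC muS vref)
    (Γ : ℝ)
    (hΓ : Γ = -2 * m * g * (muS - muC) * (vref / vs ^ 2) * Real.exp (-(vref ^ 2) / vs ^ 2))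
    (r : ℝ) (hr : 0 < r) (hrv : r ≤ vref) :
    {y : ℝ | ∃ s ∈ Set.Icc (-r) r, s ≠ 0 ∧ y = -phi s / s}.Nonempty ∧
    BddAbove {y : ℝ | ∃ s ∈ Set.Icc (-r) r, s ≠ 0 ∧ y = -phi s / s} ∧
    sSup {y : ℝ | ∃ s ∈ Set.Icc (-r) r, s ≠ 0 ∧ y = -phi s / s} ≥ -Γ ∧ 0 < -Γ := by
  have hbdd : BddAbove (sectorSlopes phi r) := by
    refine ⟨|m * g * (muS - muC)| * (2 * (2 * vref) / vs ^ 2), ?_⟩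
    rintro y ⟨s, hs, hs0, rfl⟩
    rw [hphi]
    exact neg_Fnl_shift_div_le hm hg hmuC hmu hvref
      ⟨by linarith [hs.1], hs.2.trans hrv⟩ hs0
  have hderiv : HasDerivAt phi Γ 0 := by
    have h : HasDerivAt (fun s => Fnl m g vs muC muS (s + vref) - Fnl m g vs muC muS vref)
        (m * g * (muS - muC) * (exp (-(vref ^ 2) / vs ^ 2) * (-(2 * vref) / vs ^ 2))) 0 :=
      (HasDerivAt.comp_add_const 0 vref (by rw [zero_add]; exact hasDerivAt_Fnl hvref)).sub_const _
    rw [funext hphi, hΓ]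
    convert h using 1
    ring
  have hΓneg : 0 < -Γ := by
    have hd : 0 < muS - muC := sub_pos.2 hmu
    have : 0 < 2 * m * g * (muS - muC) * (vref / vs ^ 2) * exp (-(vref ^ 2) / vs ^ 2) := by
      positivity
    linarith
  exact ⟨sectorSlopes_nonempty phi hr, hbdd,
    neg_deriv_le_csSup_sectorSlopes hderiv (by rw [hphi, zero_add, sub_self]) hr hbdd, hΓneg⟩
end

section
/- Suppose P_g is a symmetric positive definite 2×2 real matrix and τ₀, τ₁, τ₂, τ₃, τ₅ ≥ 0, τ₄ ∈ ℝ are such that the two attractor matrix inequalities (i) He(DᵀP_gF) − τ₀Π₀ − τ₁Π₁ − τ₂Π₂ − τ₃Π₃ ≺ 0 and (ii) He(DᵀP_gF) − τ₀Π₀ − τ₅Π₁ − τ₄Π₄ ≺ 0 hold. Then there exists α > 0 such that for every ε = (ε₁, ε₂) ∈ ℝ² with εᵀP_gε ≥ 1 and every f ∈ 𝔉(ε₁ + v_ref), one has 2·εᵀ P_g (A ε + (f − F_nl(v_ref))·B) ≤ −α·(ε₁² + ε₂²). -/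
open Matrix Real

/-- The set-valued extension `𝔉` of the friction nonlinearity. -/
noncomputable def Ffric (m g vs muC muS : ℝ) (v : ℝ) : Set ℝ :=
  if v = 0 then Set.Icc (-(muS * m * g)) (muS * m * g) else {Fnl m g vs muC muS v}

/-- `He(M) = M + Mᵀ`. -/
def He {n : ℕ} (M : Matrix (Fin n) (Fin n) ℝ) : Matrix (Fin n) (Fin n) ℝ := M + Mᵀ

/-- `M ≺ 0`: the quadratic form of `M` is negative definite. -/
def NegDef {n : ℕ} (M : Matrix (Fin n) (Fin n) ℝ) : Prop :=
  ∀ x : Fin n → ℝ, x ≠ 0 → x ⬝ᵥ M.mulVec x < 0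

/-- Standard basis row vectors of `ℝ⁴`. -/
def e1 : Matrix (Fin 1) (Fin 4) ℝ := !![1, 0, 0, 0]
def e3 : Matrix (Fin 1) (Fin 4) ℝ := !![0, 0, 1, 0]
def e4 : Matrix (Fin 1) (Fin 4) ℝ := !![0, 0, 0, 1]

/-- The matrix `F = [I₂ 0 0] ∈ ℝ^{2×4}`. -/
def Fmat : Matrix (Fin 2) (Fin 4) ℝ := !![1, 0, 0, 0; 0, 1, 0, 0]

/-- The dynamics matrix `A`. -/
noncomputable def Amat (m k kv : ℝ) : Matrix (Fin 2) (Fin 2) ℝ := !![-kv / m, -k / m; 1, 0]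

/-- The input vector `B = (−1/m, 0)ᵀ`, as an element of `ℝ²`. -/
noncomputable def Bvec (m : ℝ) : Fin 2 → ℝ := ![-1 / m, 0]

/-- The matrix `D = [A  B  −F_nl(v_ref)·B] ∈ ℝ^{2×4}`. -/
noncomputable def Dmat (m g vs muC muS k kv vref : ℝ) : Matrix (Fin 2) (Fin 4) ℝ :=
  !![-kv / m, -k / m, -1 / m, Fnl m g vs muC muS vref / m; 1, 0, 0, 0]

/-- `Π₀ = e₄ᵀe₄ − FᵀP_gF`. -/
def Pi0 (Pg : Matrix (Fin 2) (Fin 2) ℝ) : Matrix (Fin 4) (Fin 4) ℝ :=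
  e4ᵀ * e4 - Fmatᵀ * Pg * Fmat

/-- `Π₁ = e₃ᵀe₃ − F_S²·e₄ᵀe₄` with `F_S = μ_S m g`. -/
def Pi1 (m g muS : ℝ) : Matrix (Fin 4) (Fin 4) ℝ :=
  e3ᵀ * e3 - ((muS * m * g) ^ 2) • (e4ᵀ * e4)

/-- `Π₂ = F_C²·e₄ᵀe₄ − e₃ᵀe₃` with `F_C = μ_C m g`. -/
def Pi2 (m g muC : ℝ) : Matrix (Fin 4) (Fin 4) ℝ :=
  ((muC * m * g) ^ 2) • (e4ᵀ * e4) - e3ᵀ * e3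

/-- `Π₃ = −He((e₁ + v_ref·e₄)ᵀe₃)`. -/
def Pi3 (vref : ℝ) : Matrix (Fin 4) (Fin 4) ℝ :=
  -He ((e1 + vref • e4)ᵀ * e3)

/-- `Π₄ = (e₁ + v_ref·e₄)ᵀ(e₁ + v_ref·e₄)`. -/
def Pi4 (vref : ℝ) : Matrix (Fin 4) (Fin 4) ℝ :=
  (e1 + vref • e4)ᵀ * (e1 + vref • e4)

lemma negDef_bound {n : ℕ} (M : Matrix (Fin n) (Fin n) ℝ) (hM : NegDef M) :
    ∃ α > 0, ∀ x : Fin n → ℝ, x ⬝ᵥ M.mulVec x ≤ -α * (∑ i, (x i)^2) := by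
  rcases Nat.eq_zero_or_pos n with hn | hn
  · exact ⟨1, one_pos, by subst hn; intro x; simp [dotProduct]⟩
  have hn' : (0:ℝ) < n := by exact_mod_cast hn
  have hq : Continuous (fun x : Fin n → ℝ => x ⬝ᵥ M.mulVec x) := by
    simp only [dotProduct, Matrix.mulVec]
    fun_prop
  have hcomp : IsCompact (Metric.sphere (0 : Fin n → ℝ) 1) := isCompact_sphere 0 1
  have hne : (Metric.sphere (0 : Fin n → ℝ) 1).Nonempty := by
    have : Nonempty (Fin n) := Fin.pos_iff_nonempty.mp hn
    refine ⟨Pi.single (Classical.arbitrary (Fin n)) (1:ℝ), ?_⟩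
    simp [Pi.norm_single]
  obtain ⟨x₀, hx₀, hmax⟩ := hcomp.exists_isMaxOn hne hq.continuousOn
  have hx₀ne : x₀ ≠ 0 := by
    intro h
    rw [h] at hx₀
    simp at hx₀
  set α0 : ℝ := -(x₀ ⬝ᵥ M.mulVec x₀) with hα0
  have hα0pos : 0 < α0 := by
    have := hM x₀ hx₀ne; linarith
  refine ⟨α0 / n, by positivity, fun x => ?_⟩
  rcases eq_or_ne x 0 with rfl | hx
  · simp [dotProduct]
  have hc : (0:ℝ) < ‖x‖ := norm_pos_iff.mpr hx
  set u : Fin n → ℝ := ‖x‖⁻¹ • x with hu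
  have hus : u ∈ Metric.sphere (0 : Fin n → ℝ) 1 := by
    simp [hu, norm_smul, abs_of_pos (inv_pos.mpr hc), inv_mul_cancel₀ hc.ne']
  have hqu : u ⬝ᵥ M.mulVec u ≤ -α0 := by
    have := hmax hus; simp only [Set.mem_setOf_eq] at this; linarith [this]
  have hxu : x = ‖x‖ • u := by
    rw [hu, smul_smul, mul_inv_cancel₀ hc.ne', one_smul]
  have hqx : x ⬝ᵥ M.mulVec x = ‖x‖^2 * (u ⬝ᵥ M.mulVec u) := by
    conv_lhs => rw [hxu]
    rw [Matrix.mulVec_smul, smul_dotProduct, dotProduct_smul,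
      smul_eq_mul, smul_eq_mul]
    ring
  have hsum : ∑ i, (x i)^2 ≤ n * ‖x‖^2 := by
    calc ∑ i, (x i)^2 ≤ ∑ _i : Fin n, ‖x‖^2 := by
          refine Finset.sum_le_sum fun i _ => ?_
          have h1 := norm_le_pi_norm x i
          have h2 : (x i)^2 = ‖x i‖^2 := by simp [Real.norm_eq_abs, sq_abs]
          rw [h2]
          exact pow_le_pow_left₀ (norm_nonneg _) h1 2
      _ = n * ‖x‖^2 := by simp [Finset.sum_const, nsmul_eq_mul]
  have e1 : x ⬝ᵥ M.mulVec x ≤ -α0 * ‖x‖^2 := by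
    rw [hqx]; nlinarith [sq_nonneg ‖x‖]
  have e2 : (α0 / n) * (∑ i, (x i)^2) ≤ α0 * ‖x‖^2 := by
    have h3 := mul_le_mul_of_nonneg_left hsum (le_of_lt (div_pos hα0pos hn'))
    have h4 : (α0 / n) * ((n:ℝ) * ‖x‖^2) = α0 * ‖x‖^2 := by field_simp
    linarith
  have e3 : -(α0 / (n:ℝ)) * (∑ i, (x i)^2) = -((α0 / n) * (∑ i, (x i)^2)) := by ring
  rw [e3]
  clear_value α0
  linarith

lemma quad_expand (M N0 N1 N2 N3 : Matrix (Fin 4) (Fin 4) ℝ) (c0 c1 c2 c3 : ℝ) (x : Fin 4 → ℝ) :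
    x ⬝ᵥ (M - c0 • N0 - c1 • N1 - c2 • N2 - c3 • N3).mulVec x
      = x ⬝ᵥ M.mulVec x - c0 * (x ⬝ᵥ N0.mulVec x) - c1 * (x ⬝ᵥ N1.mulVec x)
        - c2 * (x ⬝ᵥ N2.mulVec x) - c3 * (x ⬝ᵥ N3.mulVec x) := by
  simp [Matrix.sub_mulVec, Matrix.smul_mulVec, dotProduct_sub,
    dotProduct_smul, smul_eq_mul]

lemma quad_expand3 (M N0 N1 N2 : Matrix (Fin 4) (Fin 4) ℝ) (c0 c1 c2 : ℝ) (x : Fin 4 → ℝ) :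
    x ⬝ᵥ (M - c0 • N0 - c1 • N1 - c2 • N2).mulVec x
      = x ⬝ᵥ M.mulVec x - c0 * (x ⬝ᵥ N0.mulVec x) - c1 * (x ⬝ᵥ N1.mulVec x)
        - c2 * (x ⬝ᵥ N2.mulVec x) := by
  simp [Matrix.sub_mulVec, Matrix.smul_mulVec, dotProduct_sub,
    dotProduct_smul, smul_eq_mul]

set_option maxHeartbeats 1600000 in
theorem stmt11 (m g vs k kv muC muS vref : ℝ)
    (hm : 0 < m) (hg : 0 < g) (hvs : 0 < vs) (hk : 0 < k) (hkv : 0 < kv)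
    (hmuC : 0 < muC) (hmu : muC < muS) (hvref : 0 < vref)
    (Pg : Matrix (Fin 2) (Fin 2) ℝ) (hPg : Pg.PosDef)
    (τ0 τ1 τ2 τ3 τ5 : ℝ) (τ4 : ℝ)
    (hτ0 : 0 ≤ τ0) (hτ1 : 0 ≤ τ1) (hτ2 : 0 ≤ τ2) (hτ3 : 0 ≤ τ3) (hτ5 : 0 ≤ τ5)
    (hLMI1 : NegDef (He ((Dmat m g vs muC muS k kv vref)ᵀ * Pg * Fmat)
      - τ0 • Pi0 Pg - τ1 • Pi1 m g muS - τ2 • Pi2 m g muC - τ3 • Pi3 vref))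
    (hLMI2 : NegDef (He ((Dmat m g vs muC muS k kv vref)ᵀ * Pg * Fmat)
      - τ0 • Pi0 Pg - τ5 • Pi1 m g muS - τ4 • Pi4 vref)) :
    ∃ α > 0, ∀ ε1 ε2 : ℝ, ∀ f ∈ Ffric m g vs muC muS (ε1 + vref),
      1 ≤ ![ε1, ε2] ⬝ᵥ Pg.mulVec ![ε1, ε2] →
      2 * (![ε1, ε2] ⬝ᵥ Pg.mulVec
          ((Amat m k kv).mulVec ![ε1, ε2] + (f - Fnl m g vs muC muS vref) • Bvec m))
        ≤ -α * (ε1 ^ 2 + ε2 ^ 2) := by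
  obtain ⟨α1, hα1, hb1⟩ := negDef_bound _ hLMI1
  obtain ⟨α2, hα2, hb2⟩ := negDef_bound _ hLMI2
  refine ⟨min α1 α2, lt_min hα1 hα2, ?_⟩
  intro ε1 ε2 f hf hP
  have hs : Pg 1 0 = Pg 0 1 := by
    have h := hPg.isHermitian
    rw [Matrix.IsHermitian, ← Matrix.ext_iff] at h
    have := h 1 0
    simpa using this.symm
  set ξ : Fin 4 → ℝ := ![ε1, ε2, f, 1] with hξ
  -- the quadratic form identities
  have hHe : ξ ⬝ᵥ (He ((Dmat m g vs muC muS k kv vref)ᵀ * Pg * Fmat)).mulVec ξ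
      = 2 * (![ε1, ε2] ⬝ᵥ Pg.mulVec
          ((Amat m k kv).mulVec ![ε1, ε2] + (f - Fnl m g vs muC muS vref) • Bvec m)) := by
    have hm' : m ≠ 0 := hm.ne'
    simp only [hξ]
    simp [He, Dmat, Amat, Bvec, Fmat, Matrix.mulVec, dotProduct, Matrix.mul_apply,
      Fin.sum_univ_four, Fin.sum_univ_two, Matrix.transpose_apply, Matrix.vecHead,
      Matrix.vecTail, hs]
    field_simp
    ring
  have hq0 : ξ ⬝ᵥ (Pi0 Pg).mulVec ξ = 1 - ![ε1,ε2] ⬝ᵥ Pg.mulVec ![ε1,ε2] := by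
    simp only [hξ]
    simp [Pi0, e4, Fmat, Matrix.mulVec, dotProduct, Matrix.mul_apply,
      Fin.sum_univ_four, Fin.sum_univ_two, Matrix.transpose_apply, Fin.sum_univ_one,
      Matrix.vecHead, Matrix.vecTail]
    ring
  have hq1 : ξ ⬝ᵥ (Pi1 m g muS).mulVec ξ = f^2 - (muS*m*g)^2 := by
    simp only [hξ]
    simp [Pi1, e3, e4, Matrix.mulVec, dotProduct, Matrix.mul_apply,
      Fin.sum_univ_four, Fin.sum_univ_one, Matrix.transpose_apply, Matrix.vecHead,
      Matrix.vecTail]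
    ring
  have hq2 : ξ ⬝ᵥ (Pi2 m g muC).mulVec ξ = (muC*m*g)^2 - f^2 := by
    simp only [hξ]
    simp [Pi2, e3, e4, Matrix.mulVec, dotProduct, Matrix.mul_apply,
      Fin.sum_univ_four, Fin.sum_univ_one, Matrix.transpose_apply, Matrix.vecHead,
      Matrix.vecTail]
    ring
  have hq3 : ξ ⬝ᵥ (Pi3 vref).mulVec ξ = -(2 * ((ε1 + vref) * f)) := by
    simp only [hξ]
    simp [Pi3, He, e1, e3, e4, Matrix.mulVec, dotProduct, Matrix.mul_apply,
      Fin.sum_univ_four, Fin.sum_univ_one, Matrix.transpose_apply, Matrix.vecHead,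
      Matrix.vecTail]
    ring
  have hq4 : ξ ⬝ᵥ (Pi4 vref).mulVec ξ = (ε1 + vref)^2 := by
    simp only [hξ]
    simp [Pi4, e1, e4, Matrix.mulVec, dotProduct, Matrix.mul_apply,
      Fin.sum_univ_four, Fin.sum_univ_one, Matrix.transpose_apply, Matrix.vecHead,
      Matrix.vecTail]
    ring
  have hsum : ∑ i, (ξ i)^2 = ε1^2 + ε2^2 + f^2 + 1 := by
    simp only [hξ]
    simp [Fin.sum_univ_four]
  -- bound on |f|
  have hmuS : 0 < muS := lt_trans hmuC hmu
  have hFS : 0 < muS * m * g := by positivity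
  have hsq : ε1^2 + ε2^2 ≥ 0 := by positivity
  have hmin1 : min α1 α2 ≤ α1 := min_le_left _ _
  have hmin2 : min α1 α2 ≤ α2 := min_le_right _ _
  by_cases hv : ε1 + vref = 0
  · -- stuck case : use LMI2
    have hfI : f ∈ Set.Icc (-(muS*m*g)) (muS*m*g) := by
      rw [Ffric, if_pos hv] at hf; exact hf
    have hf2 : f^2 ≤ (muS*m*g)^2 := sq_le_sq' hfI.1 hfI.2
    have key := hb2 ξ
    rw [quad_expand3, hHe, hq0, hq1, hq4, hsum, hv] at key
    have h0 : τ0 * (1 - ![ε1,ε2] ⬝ᵥ Pg.mulVec ![ε1,ε2]) ≤ 0 :=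
      mul_nonpos_of_nonneg_of_nonpos hτ0 (by linarith)
    have h1 : τ5 * (f^2 - (muS*m*g)^2) ≤ 0 :=
      mul_nonpos_of_nonneg_of_nonpos hτ5 (by linarith)
    have hA : (0:ℝ) ≤ α2 * (f^2 + 1) := mul_nonneg hα2.le (by positivity)
    have hB := mul_le_mul_of_nonneg_right hmin2 hsq
    have hC : -α2 * (ε1^2 + ε2^2 + f^2 + 1) ≤ -α2 * (ε1^2+ε2^2) - α2 * (f^2+1) := by ring_nf; linarith [hA]
    linarith only [key, h0, h1, hA, hB, hC]
  · -- sliding case : use LMI1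
    have hfe : f = Fnl m g vs muC muS (ε1 + vref) := by
      rw [Ffric, if_neg hv] at hf; exact hf
    set v : ℝ := ε1 + vref with hvdef
    set E : ℝ := Real.exp (-(v^2)/vs^2) with hE
    have hE0 : 0 < E := Real.exp_pos _
    have hE1 : E ≤ 1 := by
      rw [hE, Real.exp_le_one_iff]
      exact div_nonpos_of_nonpos_of_nonneg (neg_nonpos.mpr (sq_nonneg v)) (sq_nonneg vs)
    set c : ℝ := m * g * (muC + (muS - muC) * E) with hc
    have hd0 : 0 ≤ (muS - muC) * E := mul_nonneg (by linarith) hE0.le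
    have hd1 : (muS - muC) * E ≤ muS - muC := mul_le_of_le_one_right (by linarith) hE1
    have hc1 : muC * m * g ≤ c := by
      rw [hc]
      calc muC * m * g = m * g * muC := by ring
        _ ≤ m * g * (muC + (muS - muC) * E) :=
            mul_le_mul_of_nonneg_left (by linarith) (by positivity)
    have hc2 : c ≤ muS * m * g := by
      rw [hc]
      calc m * g * (muC + (muS - muC) * E) ≤ m * g * muS :=
            mul_le_mul_of_nonneg_left (by linarith) (by positivity)
        _ = muS * m * g := by ring
    have hcpos : 0 < c := lt_of_lt_of_le (by positivity) hc1
    have hfc : f = c * Real.sign v := by rw [hfe, Fnl, hc, hE]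
    have hsign : (v < 0 ∧ f = -c) ∨ (0 < v ∧ f = c) := by
      rcases lt_trichotomy v 0 with h | h | h
      · left; exact ⟨h, by rw [hfc, Real.sign_of_neg h]; ring⟩
      · exact absurd h hv
      · right; exact ⟨h, by rw [hfc, Real.sign_of_pos h]; ring⟩
    have hf2 : f^2 = c^2 := by rcases hsign with ⟨_, h⟩ | ⟨_, h⟩ <;> rw [h] <;> ring
    have hfS : f^2 ≤ (muS*m*g)^2 := by rw [hf2]; exact pow_le_pow_left₀ hcpos.le hc2 2
    have hfC : (muC*m*g)^2 ≤ f^2 := by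
      rw [hf2]; exact pow_le_pow_left₀ (by positivity) hc1 2
    have hvf : 0 ≤ v * f := by
      rcases hsign with ⟨h, h'⟩ | ⟨h, h'⟩
      · rw [h']
        calc (0:ℝ) ≤ (-v) * c := mul_nonneg (by linarith) hcpos.le
          _ = v * -c := by ring
      · rw [h']; exact mul_nonneg h.le hcpos.le
    have key := hb1 ξ
    rw [quad_expand, hHe, hq0, hq1, hq2, hq3, hsum] at key
    have h0 : τ0 * (1 - ![ε1,ε2] ⬝ᵥ Pg.mulVec ![ε1,ε2]) ≤ 0 :=
      mul_nonpos_of_nonneg_of_nonpos hτ0 (by linarith)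
    have h1 : τ1 * (f^2 - (muS*m*g)^2) ≤ 0 :=
      mul_nonpos_of_nonneg_of_nonpos hτ1 (by linarith)
    have h2 : τ2 * ((muC*m*g)^2 - f^2) ≤ 0 :=
      mul_nonpos_of_nonneg_of_nonpos hτ2 (by linarith)
    have h3 : τ3 * (-(2 * (v * f))) ≤ 0 :=
      mul_nonpos_of_nonneg_of_nonpos hτ3 (by linarith)
    have hA : (0:ℝ) ≤ α1 * (f^2 + 1) := mul_nonneg hα1.le (by positivity)
    have hB := mul_le_mul_of_nonneg_right hmin1 hsq
    have hC : -α1 * (ε1^2 + ε2^2 + f^2 + 1) ≤ -α1 * (ε1^2+ε2^2) - α1 * (f^2+1) := by ring_nf; linarith [hA]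
    linarith only [key, h0, h1, h2, h3, hA, hB, hC]
end

section
/- Suppose P_g is a symmetric positive definite 2×2 real matrix and τ₀, τ₁, τ₂, τ₃, τ₅ ≥ 0, τ₄ ∈ ℝ are such that the two attractor matrix inequalities (i) He(DᵀP_gF) − τ₀Π₀ − τ₁Π₁ − τ₂Π₂ − τ₃Π₃ ≺ 0 and (ii) He(DᵀP_gF) − τ₀Π₀ − τ₅Π₁ − τ₄Π₄ ≺ 0 hold. Then every solution (ε₁, ε₂, f) of the error system converges to the set 𝒜 = {ε ∈ ℝ² : εᵀP_gε < 1}: for every c > 1 there exists T ≥ 0 such that ε(t)ᵀP_gε(t) < c for all t ≥ T. -/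
open Matrix Real

-- AUX LEMMAS (placed above theorem)
open Filter Set Topology in
private lemma negdef_bound' {M : Matrix (Fin 4) (Fin 4) ℝ} (h : NegDef M) :
    ∃ δ > 0, ∀ x : Fin 4 → ℝ, x 3 = 1 → x ⬝ᵥ M.mulVec x ≤ -δ := by
  have hq : Continuous fun x : Fin 4 → ℝ => x ⬝ᵥ M.mulVec x := by
    simp only [dotProduct, Matrix.mulVec]
    exact continuous_finset_sum _ fun i _ => (continuous_apply i).mul
      (continuous_finset_sum _ fun j _ => (continuous_const.mul (continuous_apply j)))
  have hc : IsCompact (Metric.sphere (0 : Fin 4 → ℝ) 1) := isCompact_sphere 0 1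
  have hne : (Metric.sphere (0 : Fin 4 → ℝ) 1).Nonempty :=
    NormedSpace.sphere_nonempty.mpr zero_le_one
  obtain ⟨x0, hx0, hmax⟩ := hc.exists_isMaxOn hne hq.continuousOn
  have hx0n : ‖x0‖ = 1 := by simpa using hx0
  have hx0ne : x0 ≠ 0 := by intro hh; rw [hh] at hx0n; simp at hx0n
  refine ⟨-(x0 ⬝ᵥ M.mulVec x0), by simpa using h x0 hx0ne, ?_⟩
  intro x hx3
  have hr1 : (1:ℝ) ≤ ‖x‖ := by
    have := norm_le_pi_norm x 3
    rw [hx3] at this; simpa using this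
  have hrpos : (0:ℝ) < ‖x‖ := lt_of_lt_of_le one_pos hr1
  set r := ‖x‖
  have hy : (r⁻¹ • x) ∈ Metric.sphere (0 : Fin 4 → ℝ) 1 := by
    simp only [Metric.mem_sphere, dist_zero_right, norm_smul, norm_inv, Real.norm_eq_abs,
      abs_of_pos hrpos]
    exact inv_mul_cancel₀ (ne_of_gt hrpos)
  have hmy : (r⁻¹ • x) ⬝ᵥ M.mulVec (r⁻¹ • x) ≤ x0 ⬝ᵥ M.mulVec x0 := hmax hy
  have hqy : (r⁻¹ • x) ⬝ᵥ M.mulVec (r⁻¹ • x) = r⁻¹ * (r⁻¹ * (x ⬝ᵥ M.mulVec x)) := by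
    rw [Matrix.mulVec_smul, smul_dotProduct, dotProduct_smul]
    simp [smul_eq_mul]
  rw [hqy] at hmy
  have hμ : x0 ⬝ᵥ M.mulVec x0 < 0 := h x0 hx0ne
  have h1 : x ⬝ᵥ M.mulVec x ≤ r^2 * (x0 ⬝ᵥ M.mulVec x0) := by
    have h2 := mul_le_mul_of_nonneg_left hmy (le_of_lt (mul_pos hrpos hrpos))
    calc x ⬝ᵥ M.mulVec x = r * r * (r⁻¹ * (r⁻¹ * (x ⬝ᵥ M.mulVec x))) := by
          field_simp
      _ ≤ r * r * (x0 ⬝ᵥ M.mulVec x0) := h2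
      _ = r^2 * (x0 ⬝ᵥ M.mulVec x0) := by ring
  nlinarith [sq_nonneg r, sq_nonneg (r-1)]

private lemma quad_sub' (A B : Matrix (Fin 4) (Fin 4) ℝ) (c : ℝ) (x : Fin 4 → ℝ) :
    x ⬝ᵥ (A - c • B).mulVec x = x ⬝ᵥ A.mulVec x - c * (x ⬝ᵥ B.mulVec x) := by
  rw [Matrix.sub_mulVec, dotProduct_sub, Matrix.smul_mulVec, dotProduct_smul, smul_eq_mul]

section quadforms
variable (Pg : Matrix (Fin 2) (Fin 2) ℝ) (x : Fin 4 → ℝ) (m g vs muC muS k kv vref : ℝ)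

private lemma qPi0 : x ⬝ᵥ (Pi0 Pg).mulVec x =
    x 3 ^ 2 - (x 0 * (Pg 0 0 * x 0 + Pg 0 1 * x 1) + x 1 * (Pg 1 0 * x 0 + Pg 1 1 * x 1)) := by
  simp [Pi0, e4, Fmat, Matrix.mulVec, dotProduct, Fin.sum_univ_four, Fin.sum_univ_two,
    Matrix.mul_apply, Matrix.sub_apply, Matrix.transpose_apply, Matrix.vecHead, Matrix.vecTail, Matrix.cons_val_zero, Matrix.cons_val_one, Matrix.head_cons, Matrix.cons_val_fin_one, Matrix.of_apply]
  ring

private lemma qPi1 : x ⬝ᵥ (Pi1 m g muS).mulVec x = x 2 ^ 2 - (muS * m * g)^2 * x 3 ^ 2 := by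
  simp [Pi1, e3, e4, Matrix.mulVec, dotProduct, Fin.sum_univ_four,
    Matrix.mul_apply, Matrix.sub_apply, Matrix.smul_apply, Matrix.transpose_apply, Matrix.vecHead, Matrix.vecTail, Matrix.cons_val_zero, Matrix.cons_val_one, Matrix.head_cons, Matrix.cons_val_fin_one, Matrix.of_apply, Fin.sum_univ_one]
  ring

private lemma qPi2 : x ⬝ᵥ (Pi2 m g muC).mulVec x = (muC * m * g)^2 * x 3 ^ 2 - x 2 ^ 2 := by
  simp [Pi2, e3, e4, Matrix.mulVec, dotProduct, Fin.sum_univ_four,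
    Matrix.mul_apply, Matrix.sub_apply, Matrix.smul_apply, Matrix.transpose_apply, Matrix.vecHead, Matrix.vecTail, Matrix.cons_val_zero, Matrix.cons_val_one, Matrix.head_cons, Matrix.cons_val_fin_one, Matrix.of_apply, Fin.sum_univ_one]
  ring

private lemma qPi3 : x ⬝ᵥ (Pi3 vref).mulVec x = -2 * ((x 0 + vref * x 3) * x 2) := by
  simp [Pi3, He, e1, e3, e4, Matrix.mulVec, dotProduct, Fin.sum_univ_four,
    Matrix.mul_apply, Matrix.add_apply, Matrix.neg_apply, Matrix.smul_apply,
    Matrix.transpose_apply, Matrix.vecHead, Matrix.vecTail, Matrix.cons_val_zero, Matrix.cons_val_one, Matrix.head_cons, Matrix.cons_val_fin_one, Matrix.of_apply, Fin.sum_univ_one]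
  ring

private lemma qPi4 : x ⬝ᵥ (Pi4 vref).mulVec x = (x 0 + vref * x 3) ^ 2 := by
  simp [Pi4, e1, e4, Matrix.mulVec, dotProduct, Fin.sum_univ_four,
    Matrix.mul_apply, Matrix.add_apply, Matrix.smul_apply, Matrix.transpose_apply, Matrix.vecHead, Matrix.vecTail, Matrix.cons_val_zero, Matrix.cons_val_one, Matrix.head_cons, Matrix.cons_val_fin_one, Matrix.of_apply, Fin.sum_univ_one]
  ring

private lemma qHe : x ⬝ᵥ (He ((Dmat m g vs muC muS k kv vref)ᵀ * Pg * Fmat)).mulVec x =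
    2 * (((-kv/m) * x 0 + (-k/m) * x 1 + (-1/m) * x 2 + (Fnl m g vs muC muS vref / m) * x 3)
        * (Pg 0 0 * x 0 + Pg 0 1 * x 1)
      + x 0 * (Pg 1 0 * x 0 + Pg 1 1 * x 1)) := by
  simp [He, Dmat, Fmat, Matrix.mulVec, dotProduct, Fin.sum_univ_four, Fin.sum_univ_two,
    Matrix.mul_apply, Matrix.add_apply, Matrix.transpose_apply, Matrix.vecHead, Matrix.vecTail, Matrix.cons_val_zero, Matrix.cons_val_one, Matrix.head_cons, Matrix.cons_val_fin_one, Matrix.of_apply]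
  ring
end quadforms

private lemma decay' {V G : ℝ → ℝ} {δ a b : ℝ} (hab : a ≤ b)
    (hd : ∀ t ∈ Set.Icc a b, HasDerivAt V (G t) t)
    (hg : ∀ t ∈ Set.Icc a b, G t ≤ -δ) :
    V b ≤ V a - δ * (b - a) := by
  have hW : ∀ t ∈ Set.Icc a b, HasDerivAt (fun r => V r + δ * r) (G t + δ) t := by
    intro t ht
    exact ((hd t ht).add ((hasDerivAt_id t).const_mul δ)).congr_deriv (by ring)
  have hanti : AntitoneOn (fun r => V r + δ * r) (Set.Icc a b) := by
    apply antitoneOn_of_deriv_nonpos (convex_Icc a b)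
    · exact fun t ht => (hW t ht).continuousAt.continuousWithinAt
    · intro t ht
      rw [interior_Icc] at ht
      exact (hW t (Set.Ioo_subset_Icc_self ht)).differentiableAt.differentiableWithinAt
    · intro t ht
      rw [interior_Icc] at ht
      rw [(hW t (Set.Ioo_subset_Icc_self ht)).deriv]
      have := hg t (Set.Ioo_subset_Icc_self ht)
      linarith
  have := hanti (Set.left_mem_Icc.mpr hab) (Set.right_mem_Icc.mpr hab) hab
  simp only at this
  linarith

open Filter Set Topology in
private lemma stays_below' {V G : ℝ → ℝ} {δ c : ℝ} (hδ : 0 < δ)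
    (hd : ∀ t ≥ (0:ℝ), HasDerivAt V (G t) t)
    (hg : ∀ t ≥ (0:ℝ), 1 ≤ V t → G t ≤ -δ)
    (hc : 1 < c) {s : ℝ} (hs : 0 ≤ s) (hVs : V s < c) :
    ∀ t ≥ s, V t < c := by
  intro t ht
  by_contra hVt
  push_neg at hVt
  set S : Set ℝ := Set.Icc s t ∩ V ⁻¹' Set.Ici c with hS
  have hScl : IsClosed S := by
    have hcont : ContinuousOn V (Set.Icc s t) := fun r hr =>
      (hd r (le_trans hs hr.1)).continuousAt.continuousWithinAt
    exact hcont.preimage_isClosed_of_isClosed isClosed_Icc isClosed_Ici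
  have hSne : S.Nonempty := ⟨t, ⟨⟨ht, le_refl t⟩, hVt⟩⟩
  have hSbd : BddBelow S := ⟨s, fun r hr => hr.1.1⟩
  set u := sInf S with hu
  have huS : u ∈ S := hScl.csInf_mem hSne hSbd
  have hsu : s < u := by
    rcases lt_or_eq_of_le huS.1.1 with h | h
    · exact h
    · exfalso; rw [← h] at huS; exact absurd huS.2 (not_le.mpr hVs)
  have hGu : G u ≤ -δ := hg u (le_trans hs (le_of_lt hsu)) (le_trans (le_of_lt hc) huS.2)
  have hder := hd u (le_trans hs (le_of_lt hsu))
  rw [hasDerivAt_iff_tendsto_slope] at hder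
  have hlt : ∀ᶠ r in 𝓝[≠] u, slope V u r < 0 :=
    hder.eventually_lt_const (by linarith)
  have hne : (𝓝[Set.Ioo s u] u).NeBot := right_nhdsWithin_Ioo_neBot hsu
  have hsub : Set.Ioo s u ⊆ {u}ᶜ := fun r hr => ne_of_lt hr.2
  have hlt' : ∀ᶠ r in 𝓝[Set.Ioo s u] u, slope V u r < 0 :=
    hlt.filter_mono (nhdsWithin_mono u hsub)
  obtain ⟨r, hrs, hru⟩ := (hlt'.and (eventually_mem_nhdsWithin)).exists
  have hru2 : r < u := hru.2
  have hVr : V u < V r := by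
    rw [slope_def_field] at hrs
    have hneg : r - u < 0 := by linarith
    rcases div_neg_iff.mp hrs with ⟨h1, h2⟩ | ⟨h1, h2⟩ <;> linarith
  have hrnotS : r ∉ S := fun h => absurd (csInf_le hSbd h) (not_le.mpr hru2)
  have : V r < c := by
    by_contra h; push_neg at h
    exact hrnotS ⟨⟨le_of_lt hru.1, le_trans (le_of_lt hru2) huS.1.2⟩, h⟩
  have : c ≤ V u := huS.2
  linarith

private lemma fnl_bounds' {m g vs muC muS v : ℝ} (hm : 0 < m) (hg : 0 < g) (hvs : 0 < vs)
    (hmuC : 0 < muC) (hmu : muC < muS) (hv : v ≠ 0) :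
    (muC * m * g) ^ 2 ≤ (Fnl m g vs muC muS v) ^ 2 ∧
    (Fnl m g vs muC muS v) ^ 2 ≤ (muS * m * g) ^ 2 ∧
    0 ≤ v * Fnl m g vs muC muS v := by
  have hE0 : 0 < Real.exp (-(v ^ 2) / vs ^ 2) := Real.exp_pos _
  have hE1 : Real.exp (-(v ^ 2) / vs ^ 2) ≤ 1 := by
    rw [Real.exp_le_one_iff]
    apply div_nonpos_of_nonpos_of_nonneg
    · simp [sq_nonneg]
    · positivity
  unfold Fnl
  generalize hE : Real.exp (-(v ^ 2) / vs ^ 2) = E at *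
  have hmg : 0 < m * g := mul_pos hm hg
  have hX1 : muC ≤ muC + (muS - muC) * E := by nlinarith
  have hX2 : muC + (muS - muC) * E ≤ muS := by nlinarith
  have hX0 : 0 < muC + (muS - muC) * E := lt_of_lt_of_le hmuC hX1
  have h1 : muC ^ 2 ≤ (muC + (muS - muC) * E) ^ 2 := by nlinarith
  have h2 : (muC + (muS - muC) * E) ^ 2 ≤ muS ^ 2 := by nlinarith
  have hsq := mul_pos hmg hmg
  rcases lt_or_gt_of_ne hv with hvn | hvp
  · rw [Real.sign_of_neg hvn]
    refine ⟨by nlinarith, by nlinarith, by nlinarith [mul_pos (mul_pos hmg hX0) (neg_pos.mpr hvn)]⟩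
  · rw [Real.sign_of_pos hvp]
    refine ⟨by nlinarith, by nlinarith, by nlinarith [mul_pos (mul_pos hmg hX0) hvp]⟩

theorem stmt12 (m g vs k kv muC muS vref : ℝ)
    (hm : 0 < m) (hg : 0 < g) (hvs : 0 < vs) (hk : 0 < k) (hkv : 0 < kv)
    (hmuC : 0 < muC) (hmu : muC < muS) (hvref : 0 < vref)
    (Pg : Matrix (Fin 2) (Fin 2) ℝ) (hPg : Pg.PosDef)
    (τ0 τ1 τ2 τ3 τ5 : ℝ) (τ4 : ℝ)
    (hτ0 : 0 ≤ τ0) (hτ1 : 0 ≤ τ1) (hτ2 : 0 ≤ τ2) (hτ3 : 0 ≤ τ3) (hτ5 : 0 ≤ τ5)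
    (hLMI1 : NegDef (He ((Dmat m g vs muC muS k kv vref)ᵀ * Pg * Fmat)
      - τ0 • Pi0 Pg - τ1 • Pi1 m g muS - τ2 • Pi2 m g muC - τ3 • Pi3 vref))
    (hLMI2 : NegDef (He ((Dmat m g vs muC muS k kv vref)ᵀ * Pg * Fmat)
      - τ0 • Pi0 Pg - τ5 • Pi1 m g muS - τ4 • Pi4 vref))
    -- a solution (ε₁, ε₂, f) of the error system:
    (ε1 ε2 f : ℝ → ℝ)
    (hsol : ∀ t : ℝ, 0 ≤ t →
      f t ∈ Ffric m g vs muC muS (ε1 t + vref) ∧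
      HasDerivAt ε1
        (-(1 / m) * (f t - Fnl m g vs muC muS vref) - (kv / m) * ε1 t - (k / m) * ε2 t) t ∧
      HasDerivAt ε2 (ε1 t) t) :
    ∀ c > 1, ∃ T ≥ (0 : ℝ), ∀ t ≥ T,
      ![ε1 t, ε2 t] ⬝ᵥ Pg.mulVec ![ε1 t, ε2 t] < c := by

  intro c hc
  obtain ⟨δ1, hδ1, hB1⟩ := negdef_bound' hLMI1
  obtain ⟨δ2, hδ2, hB2⟩ := negdef_bound' hLMI2
  set δ := min δ1 δ2 with hδdef
  have hδ : 0 < δ := lt_min hδ1 hδ2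
  have psym : Pg 1 0 = Pg 0 1 := by
    have h := congrFun (congrFun hPg.1 0) 1
    simpa [Matrix.conjTranspose_apply] using h
  set V : ℝ → ℝ := fun t => ![ε1 t, ε2 t] ⬝ᵥ Pg.mulVec ![ε1 t, ε2 t] with hVdef
  obtain ⟨G, hGdef⟩ : ∃ G : ℝ → ℝ, ∀ t, G t = (![ε1 t, ε2 t, f t, 1]) ⬝ᵥ
      (He ((Dmat m g vs muC muS k kv vref)ᵀ * Pg * Fmat)).mulVec (![ε1 t, ε2 t, f t, 1]) :=
    ⟨_, fun t => rfl⟩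
  have hVexp : ∀ t, V t = ε1 t * (Pg 0 0 * ε1 t + Pg 0 1 * ε2 t)
      + ε2 t * (Pg 1 0 * ε1 t + Pg 1 1 * ε2 t) := by
    intro t
    rw [hVdef]
    simp [Matrix.mulVec, dotProduct, Fin.sum_univ_two]
  have hVd : ∀ t ≥ (0:ℝ), HasDerivAt V (G t) t := by
    intro t ht
    obtain ⟨hf, h1, h2⟩ := hsol t ht
    have hd' : HasDerivAt (fun r => ε1 r * (Pg 0 0 * ε1 r + Pg 0 1 * ε2 r)
        + ε2 r * (Pg 1 0 * ε1 r + Pg 1 1 * ε2 r))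
        ((-(1/m)*(f t - Fnl m g vs muC muS vref) - (kv/m)*ε1 t - (k/m)*ε2 t)
            * (Pg 0 0 * ε1 t + Pg 0 1 * ε2 t)
          + ε1 t * (Pg 0 0 * (-(1/m)*(f t - Fnl m g vs muC muS vref) - (kv/m)*ε1 t - (k/m)*ε2 t)
            + Pg 0 1 * ε1 t)
          + (ε1 t * (Pg 1 0 * ε1 t + Pg 1 1 * ε2 t)
          + ε2 t * (Pg 1 0 * (-(1/m)*(f t - Fnl m g vs muC muS vref) - (kv/m)*ε1 t - (k/m)*ε2 t)
            + Pg 1 1 * ε1 t))) t :=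
      (h1.mul ((h1.const_mul (Pg 0 0)).add (h2.const_mul (Pg 0 1)))).add
        (h2.mul ((h1.const_mul (Pg 1 0)).add (h2.const_mul (Pg 1 1))))
    have hfun : V = fun r => ε1 r * (Pg 0 0 * ε1 r + Pg 0 1 * ε2 r)
        + ε2 r * (Pg 1 0 * ε1 r + Pg 1 1 * ε2 r) := funext fun r => hVexp r
    rw [hfun]
    have hGt : G t = (-(1/m)*(f t - Fnl m g vs muC muS vref) - (kv/m)*ε1 t - (k/m)*ε2 t)
            * (Pg 0 0 * ε1 t + Pg 0 1 * ε2 t)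
          + ε1 t * (Pg 0 0 * (-(1/m)*(f t - Fnl m g vs muC muS vref) - (kv/m)*ε1 t - (k/m)*ε2 t)
            + Pg 0 1 * ε1 t)
          + (ε1 t * (Pg 1 0 * ε1 t + Pg 1 1 * ε2 t)
          + ε2 t * (Pg 1 0 * (-(1/m)*(f t - Fnl m g vs muC muS vref) - (kv/m)*ε1 t - (k/m)*ε2 t)
            + Pg 1 1 * ε1 t)) := by
      rw [hGdef t, qHe]
      simp only [Matrix.cons_val_zero, Matrix.cons_val_one, Matrix.head_cons,
        Matrix.cons_val_two, Matrix.tail_cons, Matrix.cons_val_three, mul_one, one_pow]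
      rw [psym]
      ring
    rw [hGt]
    exact hd'
  have hG : ∀ t ≥ (0:ℝ), 1 ≤ V t → G t ≤ -δ := by
    intro t ht hV1
    obtain ⟨hf, -, -⟩ := hsol t ht
    by_cases hv : ε1 t + vref = 0
    · -- sticking case, use LMI2
      have hfI : f t ∈ Set.Icc (-(muS*m*g)) (muS*m*g) := by
        rw [Ffric, if_pos hv] at hf; exact hf
      have hM := hB2 (![ε1 t, ε2 t, f t, 1]) (by simp)
      rw [quad_sub', quad_sub', quad_sub', qPi0, qPi1, qPi4, ← hGdef t] at hM
      simp only [Matrix.cons_val_zero, Matrix.cons_val_one, Matrix.head_cons,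
        Matrix.cons_val_two, Matrix.tail_cons, Matrix.cons_val_three, mul_one, one_pow] at hM
      rw [← hVexp t] at hM
      have hz : ε1 t + vref = 0 := hv
      have hf2 : (f t)^2 ≤ (muS*m*g)^2 := sq_le_sq' hfI.1 hfI.2
      have h1 : τ0 * (1 - V t) ≤ 0 := mul_nonpos_of_nonneg_of_nonpos hτ0 (by linarith)
      have h2 : τ5 * ((f t)^2 - (muS*m*g)^2) ≤ 0 :=
        mul_nonpos_of_nonneg_of_nonpos hτ5 (by linarith)
      have hδ2' : δ ≤ δ2 := min_le_right _ _
      have hz2 : (ε1 t + vref)^2 = 0 := by rw [hz]; ring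
      rw [hz2, mul_zero] at hM
      linarith
    · -- slipping case, use LMI1
      have hfe : f t = Fnl m g vs muC muS (ε1 t + vref) := by
        rw [Ffric, if_neg hv] at hf; exact hf
      obtain ⟨hbC, hbS, hbsgn⟩ := fnl_bounds' hm hg hvs hmuC hmu hv
      rw [← hfe] at hbC hbS hbsgn
      have hM := hB1 (![ε1 t, ε2 t, f t, 1]) (by simp)
      rw [quad_sub', quad_sub', quad_sub', quad_sub', qPi0, qPi1, qPi2, qPi3, ← hGdef t] at hM
      simp only [Matrix.cons_val_zero, Matrix.cons_val_one, Matrix.head_cons,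
        Matrix.cons_val_two, Matrix.tail_cons, Matrix.cons_val_three, mul_one, one_pow] at hM
      rw [← hVexp t] at hM
      have h1 : τ0 * (1 - V t) ≤ 0 := mul_nonpos_of_nonneg_of_nonpos hτ0 (by linarith)
      have h2 : τ1 * ((f t)^2 - (muS*m*g)^2) ≤ 0 :=
        mul_nonpos_of_nonneg_of_nonpos hτ1 (by linarith)
      have h3 : τ2 * ((muC*m*g)^2 - (f t)^2) ≤ 0 :=
        mul_nonpos_of_nonneg_of_nonpos hτ2 (by linarith)
      have h4 : τ3 * (-2 * ((ε1 t + vref) * f t)) ≤ 0 :=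
        mul_nonpos_of_nonneg_of_nonpos hτ3 (by linarith)
      have hδ1' : δ ≤ δ1 := min_le_left _ _
      nlinarith [hM]
  by_cases h0 : V 0 < c
  · exact ⟨0, le_refl 0, fun t ht => stays_below' hδ hVd hG hc le_rfl h0 t ht⟩
  · push_neg at h0
    have hV0pos : 0 < V 0 := lt_of_lt_of_le (lt_trans one_pos hc) h0
    set T := V 0 / δ with hT
    have hTpos : 0 < T := div_pos hV0pos hδ
    have hex : ∃ s ∈ Set.Icc (0:ℝ) T, V s < c := by
      by_contra hall
      push_neg at hall
      have hdecay := decay' (le_of_lt hTpos)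
        (fun r hr => hVd r hr.1)
        (fun r hr => hG r hr.1 (le_trans (le_of_lt hc) (hall r hr)))
      have hδT : δ * (T - 0) = V 0 := by
        rw [hT]; field_simp; ring
      have hVT : V T ≤ 0 := by linarith
      have := hall T ⟨le_of_lt hTpos, le_refl T⟩
      linarith
    obtain ⟨s, hsI, hVs⟩ := hex
    exact ⟨T, le_of_lt hTpos, fun t ht =>
      stays_below' hδ hVd hG hc hsI.1 hVs t (le_trans hsI.2 ht)⟩
end

section
/- If a symmetric positive definite 2×2 real matrix P_g and scalars τ₀, τ₁, τ₂, τ₃ ≥ 0 satisfy the attractor matrix inequality He(DᵀP_gF) − τ₀Π₀ − τ₁Π₁ − τ₂Π₂ − τ₃Π₃ ≺ 0, then necessarily AᵀP_g + P_gA + τ₀·P_g ≺ 0, and consequently τ₀ < −2·max{Re μ : μ an eigenvalue of A}. -/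
open Matrix Real

lemma re_form (M : Matrix (Fin 2) (Fin 2) ℝ) (v : Fin 2 → ℂ) :
    (star v ⬝ᵥ (M.map Complex.ofReal) *ᵥ v).re =
      (fun i => (v i).re) ⬝ᵥ M *ᵥ (fun i => (v i).re) +
      (fun i => (v i).im) ⬝ᵥ M *ᵥ (fun i => (v i).im) := by
  simp [Matrix.mulVec, dotProduct, Fin.sum_univ_two, Complex.mul_re, Complex.mul_im,
    Complex.add_re, Complex.add_im, Matrix.map_apply]
  ring


theorem stmt13 (m g vs k kv muC muS vref : ℝ)
    (hm : 0 < m) (hg : 0 < g) (hvs : 0 < vs) (hk : 0 < k) (hkv : 0 < kv)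
    (hmuC : 0 < muC) (hmu : muC < muS) (hvref : 0 < vref)
    (Pg : Matrix (Fin 2) (Fin 2) ℝ) (hPg : Pg.PosDef)
    (τ0 τ1 τ2 τ3 : ℝ)
    (hτ0 : 0 ≤ τ0) (hτ1 : 0 ≤ τ1) (hτ2 : 0 ≤ τ2) (hτ3 : 0 ≤ τ3)
    (hLMI1 : NegDef (He ((Dmat m g vs muC muS k kv vref)ᵀ * Pg * Fmat)
      - τ0 • Pi0 Pg - τ1 • Pi1 m g muS - τ2 • Pi2 m g muC - τ3 • Pi3 vref)) :
    NegDef ((Amat m k kv)ᵀ * Pg + Pg * Amat m k kv + τ0 • Pg) ∧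
    (∀ μ : ℂ, μ ∈ spectrum ℂ ((Amat m k kv).map Complex.ofReal) → τ0 < -2 * μ.re) := by
  set M : Matrix (Fin 2) (Fin 2) ℝ := (Amat m k kv)ᵀ * Pg + Pg * Amat m k kv + τ0 • Pg with hMdef
  have part1 : NegDef M := by
    intro y hy
    have hx : (![y 0, y 1, 0, 0] : Fin 4 → ℝ) ≠ 0 := by
      intro h
      apply hy
      funext i
      fin_cases i
      · exact congrFun h 0
      · exact congrFun h 1
    have hsym : Pg 1 0 = Pg 0 1 := by
      have := congrFun (congrFun hPg.1 0) 1
      simpa [Matrix.conjTranspose_apply] using this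
    have h := hLMI1 _ hx
    have key : (![y 0, y 1, 0, 0] : Fin 4 → ℝ) ⬝ᵥ
        (He ((Dmat m g vs muC muS k kv vref)ᵀ * Pg * Fmat)
          - τ0 • Pi0 Pg - τ1 • Pi1 m g muS - τ2 • Pi2 m g muC - τ3 • Pi3 vref) *ᵥ
        (![y 0, y 1, 0, 0] : Fin 4 → ℝ) = y ⬝ᵥ M *ᵥ y := by
      simp [hMdef, He, Dmat, Fmat, Amat, Pi0, Pi1, Pi2, Pi3, e1, e3, e4,
        Matrix.mulVec, dotProduct, Fin.sum_univ_four, Fin.sum_univ_two,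
        Matrix.mul_apply, Matrix.sub_apply, Matrix.add_apply, Matrix.smul_apply,
        Matrix.transpose_apply, Matrix.neg_apply, Matrix.vecHead, Matrix.vecTail]
      rw [hsym]
    rw [key] at h
    exact h
  refine ⟨part1, ?_⟩
  intro μ hμ
  set A' : Matrix (Fin 2) (Fin 2) ℂ := (Amat m k kv).map Complex.ofReal with hA'
  have hdet : (μ • (1 : Matrix (Fin 2) (Fin 2) ℂ) - A').det = 0 := by
    have := spectrum.mem_iff.mp hμ
    rw [Matrix.isUnit_iff_isUnit_det] at this
    simpa [isUnit_iff_ne_zero, Algebra.algebraMap_eq_smul_one] using this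
  obtain ⟨v, hv0, hveq0⟩ := Matrix.exists_mulVec_eq_zero_iff.mpr hdet
  have hveq : A' *ᵥ v = μ • v := by
    have : (μ • (1 : Matrix (Fin 2) (Fin 2) ℂ)) *ᵥ v - A' *ᵥ v = 0 := by
      rw [← Matrix.sub_mulVec]; exact hveq0
    have h1 : (μ • (1 : Matrix (Fin 2) (Fin 2) ℂ)) *ᵥ v = μ • v := by
      simp [Matrix.smul_mulVec]
    rw [h1] at this
    exact (sub_eq_zero.mp this).symm
  set Pg' : Matrix (Fin 2) (Fin 2) ℂ := Pg.map Complex.ofReal with hPg'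
  set M' : Matrix (Fin 2) (Fin 2) ℂ := M.map Complex.ofReal with hM'
  have hMmap : M' = A'ᵀ * Pg' + Pg' * A' + (τ0 : ℂ) • Pg' := by
    ext i j
    simp only [hM', hMdef, hA', hPg', Matrix.map_apply, Matrix.mul_apply, Fin.sum_univ_two,
      Matrix.add_apply, Matrix.smul_apply, Matrix.transpose_apply, smul_eq_mul]
    push_cast
    ring
  set p : ℂ := star v ⬝ᵥ Pg' *ᵥ v with hp
  have hstar : A' *ᵥ star v = star (A' *ᵥ v) := by
    rw [Matrix.star_mulVec]
    have hct : A'ᴴ = A'ᵀ := by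
      ext i j
      simp [hA', Matrix.conjTranspose_apply, Matrix.map_apply, Matrix.transpose_apply]
    rw [hct, Matrix.vecMul_transpose]
  have e1' : star v ⬝ᵥ (A'ᵀ * Pg') *ᵥ v = (starRingEnd ℂ) μ * p := by
    rw [← Matrix.mulVec_mulVec, Matrix.dotProduct_mulVec, Matrix.vecMul_transpose, hstar, hveq]
    rw [star_smul]
    simp [hp, smul_dotProduct]
  have e2' : star v ⬝ᵥ (Pg' * A') *ᵥ v = μ * p := by
    rw [← Matrix.mulVec_mulVec, hveq, Matrix.mulVec_smul, dotProduct_smul]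
    simp [hp]
  have e3' : star v ⬝ᵥ ((τ0 : ℂ) • Pg') *ᵥ v = (τ0 : ℂ) * p := by
    rw [Matrix.smul_mulVec, dotProduct_smul]
    simp [hp]
  have hq : star v ⬝ᵥ M' *ᵥ v = ((starRingEnd ℂ) μ + μ + (τ0 : ℂ)) * p := by
    rw [hMmap, Matrix.add_mulVec, Matrix.add_mulVec, dotProduct_add,
      dotProduct_add, e1', e2', e3']
    ring
  set a : Fin 2 → ℝ := fun i => (v i).re with ha
  set b : Fin 2 → ℝ := fun i => (v i).im with hb
  have hab : a ≠ 0 ∨ b ≠ 0 := by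
    by_contra hcon
    push_neg at hcon
    apply hv0
    funext i
    have h1 := congrFun hcon.1 i
    have h2 := congrFun hcon.2 i
    simp only [ha, hb, Pi.zero_apply] at h1 h2
    exact Complex.ext h1 h2
  have hqle : ∀ x : Fin 2 → ℝ, x ⬝ᵥ M *ᵥ x ≤ 0 := by
    intro x
    by_cases hx : x = 0
    · simp [hx]
    · exact le_of_lt (part1 x hx)
  have hqre : (star v ⬝ᵥ M' *ᵥ v).re < 0 := by
    rw [hM', re_form]
    rcases hab with h | h
    · exact add_neg_of_neg_of_nonpos (part1 a h) (hqle b)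
    · have := part1 b h
      have := hqle a
      linarith
  have hppos : ∀ x : Fin 2 → ℝ, x ≠ 0 → 0 < x ⬝ᵥ Pg *ᵥ x := by
    intro x hx
    have := hPg.dotProduct_mulVec_pos hx
    simpa using this
  have hple : ∀ x : Fin 2 → ℝ, 0 ≤ x ⬝ᵥ Pg *ᵥ x := by
    intro x
    by_cases hx : x = 0
    · simp [hx]
    · exact le_of_lt (hppos x hx)
  have hpre : 0 < p.re := by
    rw [hp, hPg', re_form]
    rcases hab with h | h
    · have := hppos a h
      have := hple b
      linarith
    · have := hppos b h
      have := hple a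
      linarith
  have hcoef : ((starRingEnd ℂ) μ + μ + (τ0 : ℂ)).re = 2 * μ.re + τ0 := by
    simp [Complex.add_re]
    ring
  have hcoefim : ((starRingEnd ℂ) μ + μ + (τ0 : ℂ)).im = 0 := by
    simp [Complex.add_im]
  have hqre2 : (star v ⬝ᵥ M' *ᵥ v).re = (2 * μ.re + τ0) * p.re := by
    rw [hq, Complex.mul_re, hcoef, hcoefim]
    ring
  rw [hqre2] at hqre
  nlinarith
end

section
/- There exist a symmetric positive definite 2×2 real matrix P_g, scalars τ₀, τ₁, τ₅ ≥ 0 and τ₄ ∈ ℝ such that the two attractor matrix inequalities hold with τ₂ = τ₃ = 0, namely He(DᵀP_gF) − τ₀Π₀ − τ₁Π₁ ≺ 0 and He(DᵀP_gF) − τ₀Π₀ − τ₅Π₁ − τ₄Π₄ ≺ 0 (feasibility of the attractor conditions, since A is Hurwitz under the standing positivity assumptions). -/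
open Matrix Real

lemma quadNeg (a b c x y : ℝ) (ha : a < 0) (hd : b ^ 2 < a * c) (hxy : x ≠ 0 ∨ y ≠ 0) :
    a * x ^ 2 + 2 * b * x * y + c * y ^ 2 < 0 := by
  rcases eq_or_ne y 0 with hy | hy
  · subst hy
    have hx : x ≠ 0 := hxy.resolve_right (by simp)
    have h : 0 < x ^ 2 := by positivity
    nlinarith
  · have h1 : 0 < y ^ 2 := by positivity
    nlinarith [sq_nonneg (a * x + b * y)]

set_option maxHeartbeats 1600000 in
lemma mainNeg (m k kv F FS2 : ℝ) (hm : 0 < m) (hk : 0 < k) (hkv : 0 < kv) (hFS2 : 0 ≤ FS2) :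
    ∃ (Pg : Matrix (Fin 2) (Fin 2) ℝ) (τ0 τ1 : ℝ), Pg.PosDef ∧ 0 ≤ τ0 ∧ 0 ≤ τ1 ∧
      NegDef (He ((!![-kv/m, -k/m, -1/m, F/m; 1,0,0,0] : Matrix (Fin 2) (Fin 4) ℝ)ᵀ
          * Pg * Fmat) - τ0 • Pi0 Pg - τ1 • (e3ᵀ * e3 - FS2 • (e4ᵀ * e4))) := by
  set G : ℝ := FS2 + 1 with hGdef
  set C : ℝ := 1 + F ^ 2 with hCdef
  have hG : 0 < G := by positivity
  have hC : 0 < C := by positivity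
  set δ : ℝ := min (kv / 4) (k * m / (8 * kv)) with hδdef
  have hδ : 0 < δ := lt_min (by positivity) (by positivity)
  have hδ1 : δ ≤ kv / 4 := min_le_left _ _
  have hδ2 : δ * (8 * kv) ≤ k * m := by
    have h : δ ≤ k * m / (8 * kv) := min_le_right _ _
    rw [le_div_iff₀ (by positivity)] at h
    linarith
  set η : ℝ := min (kv / (2 * (G * m + C))) (k * δ * m / (G * k * m ^ 2 + C * δ ^ 2))
    with hηdef
  have hη : 0 < η := lt_min (by positivity) (by positivity)
  have hη1 : η * (2 * (G * m + C)) ≤ kv := by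
    have h : η ≤ kv / (2 * (G * m + C)) := min_le_left _ _
    rw [le_div_iff₀ (by positivity)] at h
    linarith
  have hη2 : η * (G * k * m ^ 2 + C * δ ^ 2) ≤ k * δ * m := by
    have h : η ≤ k * δ * m / (G * k * m ^ 2 + C * δ ^ 2) := min_le_right _ _
    rw [le_div_iff₀ (by positivity)] at h
    linarith
  -- the 2×2 Schur data
  set W11 : ℝ := 2 * δ - 2 * kv + η * (G * m + C) with hW11def
  set W12 : ℝ := δ * (η * (G * m + C) - kv) with hW12def
  set W22 : ℝ := η * (G * k * m ^ 2 + C * δ ^ 2) - 2 * k * δ * m with hW22def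
  have hW11 : W11 ≤ -kv := by rw [hW11def]; linarith
  have hW22 : W22 ≤ -(k * δ * m) := by rw [hW22def]; linarith
  have hW12a : -(δ * kv) ≤ W12 := by
    rw [hW12def]
    nlinarith [mul_nonneg hδ.le (mul_nonneg hη.le (by positivity : (0:ℝ) ≤ G * m + C))]
  have hW12b : W12 ≤ 0 := by
    rw [hW12def]
    nlinarith [mul_nonneg hδ.le hη.le]
  have hW11' : W11 < 0 := lt_of_le_of_lt hW11 (by linarith)
  have hdet : W12 ^ 2 < W11 * W22 := by
    have h1 : W12 ^ 2 ≤ (δ * kv) ^ 2 := by nlinarith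
    have h2 : kv * (k * δ * m) ≤ W11 * W22 := by
      nlinarith [mul_le_mul (by linarith : kv ≤ -W11) (by linarith : k * δ * m ≤ -W22)
        (by positivity) (by linarith : (0:ℝ) ≤ -W11)]
    have h3 : (δ * kv) ^ 2 < kv * (k * δ * m) := by nlinarith [mul_pos hδ hkv]
    linarith
  refine ⟨!![η^2*m, η^2*δ; η^2*δ, η^2*k], η * G, η, ?_, by positivity, hη.le, ?_⟩
  · refine Matrix.posDef_iff_dotProduct_mulVec.mpr ⟨?_, ?_⟩
    · ext i j
      fin_cases i <;> fin_cases j <;> simp [Matrix.conjTranspose_apply]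
    · intro x hx
      have hx' : x 0 ≠ 0 ∨ x 1 ≠ 0 := by
        by_contra h
        push_neg at h
        exact hx (funext fun i => by fin_cases i <;> simp [h.1, h.2])
      have hδ2' : δ ^ 2 < m * k := by nlinarith
      simp only [Matrix.mulVec, dotProduct, Fin.sum_univ_two, Pi.star_apply, star_trivial,
        Matrix.cons_val', Matrix.cons_val_zero, Matrix.cons_val_one, Matrix.head_cons,
        Matrix.empty_val', Matrix.cons_val_fin_one, Matrix.head_fin_const, Matrix.of_apply]
      rcases eq_or_ne (x 1) 0 with h1 | h1
      · have hx0 : x 0 ≠ 0 := hx'.resolve_right (by simp [h1])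
        rw [h1]
        nlinarith [mul_pos (mul_pos (mul_pos hη hη) hm) (sq_pos_of_ne_zero hx0)]
      · nlinarith [mul_nonneg (by positivity : (0:ℝ) ≤ η ^ 2) (sq_nonneg (m * x 0 + δ * x 1)),
          mul_pos (mul_pos (mul_pos hη hη) (by linarith : (0:ℝ) < m * k - δ ^ 2))
            (sq_pos_of_ne_zero h1)]
  · intro x hx
    have key : x ⬝ᵥ ((He ((!![-kv/m, -k/m, -1/m, F/m; 1,0,0,0] : Matrix (Fin 2) (Fin 4) ℝ)ᵀ
          * !![η^2*m, η^2*δ; η^2*δ, η^2*k] * Fmat) - (η * G) • Pi0 !![η^2*m, η^2*δ; η^2*δ, η^2*k]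
          - η • (e3ᵀ * e3 - FS2 • (e4ᵀ * e4))).mulVec x)
        = η ^ 2 * (W11 * (x 0) ^ 2 + 2 * W12 * (x 0) * (x 1 / m) + W22 * (x 1 / m) ^ 2)
          - η * (x 2 + η * (x 0 + δ * x 1 / m)) ^ 2
          - η * (x 3 - η * F * (x 0 + δ * x 1 / m)) ^ 2 := by
      simp only [He, Fmat, Pi0, e3, e4, Matrix.mulVec, dotProduct, Fin.sum_univ_four,
        Fin.sum_univ_two, Matrix.mul_apply, Matrix.sub_apply, Matrix.add_apply,
        Matrix.smul_apply, Matrix.transpose_apply, smul_eq_mul, Matrix.cons_val',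
        Matrix.cons_val_zero, Matrix.cons_val_one, Matrix.head_cons, Matrix.empty_val',
        Matrix.cons_val_fin_one, Matrix.head_fin_const, Matrix.of_apply, Matrix.cons_val, hGdef, hCdef,
        hW11def, hW12def, hW22def]
      field_simp
      ring
    rw [key]
    rcases Classical.em (x 0 = 0 ∧ x 1 = 0) with ⟨h0, h1⟩ | h01
    · have hx' : x 2 ≠ 0 ∨ x 3 ≠ 0 := by
        by_contra h
        push_neg at h
        exact hx (funext fun i => by fin_cases i <;> simp [h0, h1, h.1, h.2])
      rw [h0, h1]
      have e0 : (0:ℝ) + δ * 0 / m = 0 := by ring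
      rw [e0]
      simp only [zero_div, mul_zero, zero_mul, add_zero, zero_pow, sub_zero, ne_eq,
        OfNat.ofNat_ne_zero, not_false_eq_true]
      rcases hx' with h2 | h2
      · nlinarith [mul_pos hη (sq_pos_of_ne_zero h2), mul_nonneg hη.le (sq_nonneg (x 3))]
      · nlinarith [mul_pos hη (sq_pos_of_ne_zero h2), mul_nonneg hη.le (sq_nonneg (x 2))]
    · have hx' : x 0 ≠ 0 ∨ x 1 / m ≠ 0 := by
        rcases Classical.em (x 0 = 0) with h0 | h0
        · right
          have h1 : x 1 ≠ 0 := fun h1 => h01 ⟨h0, h1⟩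
          exact div_ne_zero h1 hm.ne'
        · exact Or.inl h0
      have hQ := quadNeg W11 W12 W22 (x 0) (x 1 / m) hW11' hdet hx'
      have hs1 : 0 ≤ η * (x 2 + η * (x 0 + δ * x 1 / m)) ^ 2 := by positivity
      have hs2 : 0 ≤ η * (x 3 - η * F * (x 0 + δ * x 1 / m)) ^ 2 := by positivity
      have hq2 : η ^ 2 * (W11 * x 0 ^ 2 + 2 * W12 * x 0 * (x 1 / m) + W22 * (x 1 / m) ^ 2) < 0 :=
        mul_neg_of_pos_of_neg (by positivity) hQ
      linarith

theorem stmt14 (m g vs k kv muC muS vref : ℝ)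
    (hm : 0 < m) (hg : 0 < g) (hvs : 0 < vs) (hk : 0 < k) (hkv : 0 < kv)
    (hmuC : 0 < muC) (hmu : muC < muS) (hvref : 0 < vref) :
    ∃ (Pg : Matrix (Fin 2) (Fin 2) ℝ) (τ0 τ1 τ5 τ4 : ℝ),
      Pg.PosDef ∧ 0 ≤ τ0 ∧ 0 ≤ τ1 ∧ 0 ≤ τ5 ∧
      NegDef (He ((Dmat m g vs muC muS k kv vref)ᵀ * Pg * Fmat)
        - τ0 • Pi0 Pg - τ1 • Pi1 m g muS) ∧
      NegDef (He ((Dmat m g vs muC muS k kv vref)ᵀ * Pg * Fmat)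
        - τ0 • Pi0 Pg - τ5 • Pi1 m g muS - τ4 • Pi4 vref) := by
  obtain ⟨Pg, τ0, τ1, hPg, h0, h1, hN⟩ :=
    mainNeg m k kv (Fnl m g vs muC muS vref) ((muS * m * g) ^ 2) hm hk hkv (sq_nonneg _)
  refine ⟨Pg, τ0, τ1, τ1, 0, hPg, h0, h1, h1, hN, ?_⟩
  simp only [zero_smul, sub_zero]
  exact hN
end
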